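/- Let m ≥ 4 and let a_1, ..., a_m be positive reals such that sinh(a_i)·sinh(a_j) ≥ 1 for all i ≠ j. If sinh(a_1) < 2(m−1)/(m(m−2)), then ∑_{i=1}^m 1/(1 + e^{2a_i}) < 1/2. -/

import Mathlib

lemma tanh_term (x : ℝ) : 1/(1 + Real.exp (2*x)) = (1 - Real.tanh x)/2 := by
  have h : (0:ℝ) < Real.exp x := Real.exp_pos x
  rw [Real.tanh_eq_sinh_div_cosh, Real.sinh_eq, Real.cosh_eq, Real.exp_neg]
  have h2 : Real.exp (2*x) = Real.exp x * Real.exp x := by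
    rw [two_mul, Real.exp_add]
  rw [h2]
  have hne : Real.exp x ≠ 0 := ne_of_gt h
  have hden : (0:ℝ) < Real.exp x + (Real.exp x)⁻¹ := by positivity
  field_simp
  ring

theorem stmt13 (m : ℕ) (hm : 4 ≤ m) (a : ℕ → ℝ)
    (hpos : ∀ i < m, 0 < a i)
    (hcollar : ∀ i < m, ∀ j < m, i ≠ j → 1 ≤ Real.sinh (a i) * Real.sinh (a j))
    (hsmall : Real.sinh (a 0) < 2 * (m - 1) / (m * (m - 2))) :
    ∑ i ∈ Finset.range m, 1 / (1 + Real.exp (2 * a i)) < 1 / 2 := by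
  have hM : (4:ℝ) ≤ (m:ℝ) := by exact_mod_cast hm
  set M : ℝ := (m:ℝ) with hMdef
  have ha0 : 0 < a 0 := hpos 0 (by omega)
  set s := Real.sinh (a 0) with hsdef
  have hs : 0 < s := Real.sinh_pos_iff.mpr ha0
  set c := Real.cosh (a 0) with hcdef
  have hc : 0 < c := Real.cosh_pos _
  have hc2 : c^2 = 1 + s^2 := by
    rw [hcdef, hsdef, Real.cosh_sq]; ring
  -- the key scalar inequality
  have hss : s * (M*(M-2)) < 2*(M-1) := by
    rw [div_eq_mul_inv] at hsmall
    have hMpos : 0 < M*(M-2) := by nlinarith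
    calc s * (M*(M-2)) < (2*(M-1)/(M*(M-2))) * (M*(M-2)) := by
          apply mul_lt_mul_of_pos_right _ hMpos
          simpa [div_eq_mul_inv] using hsmall
      _ = 2*(M-1) := by rw [div_mul_cancel₀ _ (ne_of_gt hMpos)]
  have hsq : ((M-1)*c)^2 < (s + (M-1))^2 := by nlinarith [mul_pos hs hs]
  have key : (M-1)*c < s + (M-1) := by
    have h1 : 0 ≤ s + (M-1) := by nlinarith
    have h0 : 0 ≤ (M-1)*c := by nlinarith
    nlinarith
  -- per-term bound for i ≠ 0
  have hterm : ∀ i ∈ Finset.Ico 1 m, 1/(1 + Real.exp (2 * a i)) ≤ (1 - 1/c)/2 := by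
    intro i hi
    rw [Finset.mem_Ico] at hi
    have hai : 0 < a i := hpos i hi.2
    have hsi : 0 < Real.sinh (a i) := Real.sinh_pos_iff.mpr hai
    have hci : 0 < Real.cosh (a i) := Real.cosh_pos _
    have hci2 : (Real.cosh (a i))^2 = 1 + (Real.sinh (a i))^2 := by
      rw [Real.cosh_sq]; ring
    have hcol : 1 ≤ s * Real.sinh (a i) := by
      have := hcollar 0 (by omega) i hi.2 (by omega)
      linarith [this]
    have hcross : Real.cosh (a i) ≤ c * Real.sinh (a i) := by
      nlinarith [mul_pos hc hsi, mul_pos hs hsi]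
    have htanh : 1/c ≤ Real.tanh (a i) := by
      rw [Real.tanh_eq_sinh_div_cosh, div_le_div_iff₀ hc hci]
      linarith [hcross]
    rw [tanh_term]
    linarith
  -- split the sum
  have hsplit : Finset.range m = insert 0 (Finset.Ico 1 m) := by
    ext x
    simp [Finset.mem_Ico, Finset.mem_range]
    omega
  rw [hsplit, Finset.sum_insert (by simp)]
  have hsum : ∑ i ∈ Finset.Ico 1 m, 1 / (1 + Real.exp (2 * a i))
      ≤ (m - 1 : ℕ) • ((1 - 1/c)/2) := by
    apply Finset.sum_le_card_nsmul _ _ _ (by simpa [Nat.card_Ico] using hterm) |>.trans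
    simp [Nat.card_Ico]
  have hcard : ((m - 1 : ℕ) : ℝ) = M - 1 := by
    have : (1:ℕ) ≤ m := by omega
    push_cast [Nat.cast_sub this]
    ring
  rw [nsmul_eq_mul, hcard] at hsum
  have h0term : 1 / (1 + Real.exp (2 * a 0)) = (1 - s/c)/2 := by
    rw [tanh_term, Real.tanh_eq_sinh_div_cosh]
  have hfin : (1 - s/c)/2 + (M-1) * ((1 - 1/c)/2) < 1/2 := by
    have h2 : (M-1) < (s + (M-1))/c := (lt_div_iff₀ hc).mpr key
    have h3 : s/c + (M-1)*(1/c) = (s + (M-1))/c := by field_simp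
    nlinarith [h2, h3]
  calc 1 / (1 + Real.exp (2 * a 0)) + ∑ i ∈ Finset.Ico 1 m, 1 / (1 + Real.exp (2 * a i))
      ≤ (1 - s/c)/2 + (M-1) * ((1 - 1/c)/2) := by rw [h0term]; linarith [hsum]
    _ < 1/2 := hfin
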